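/- Random-turn lower value: for every finite game tree G, there exists a pure strategy σ for Alice such that for every pure strategy τ for Bob, the probability that Alice wins the random-turn game satisfies Pr(G, σ, τ) ≥ P(G). -/

import Mathlib

/-- The two players. -/
inductive Player : Type
  | alice
  | bob

/-- A finite game tree: either a leaf labeled with the player who wins there,
or an internal node with a nonempty finite list of children (the positions
either player may move to), encoded as a head child `first` plus the
remaining children `rest`. -/
inductive GameTree : Type
  | leaf (winner : Player)
  | node (first : GameTree) (rest : List GameTree)

namespace GameTree

/-- The random-turn value (probability that Alice wins under optimal play when
a fair coin decides who moves): `P (leaf alice) = 1`, `P (leaf bob) = 0`, and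
at an internal node it is the average of the maximum and minimum of the values
of the children. -/
noncomputable def P : GameTree → ℝ
  | leaf .alice => 1
  | leaf .bob => 0
  | node c cs =>
      ((cs.attach.map fun w => P w.1).foldr max (P c) +
       (cs.attach.map fun w => P w.1).foldr min (P c)) / 2
decreasing_by
  all_goals simp only [GameTree.node.sizeOf_spec]
  all_goals try omega
  all_goals (have h := List.sizeOf_lt_of_mem w.2; omega)

/-- A pure strategy: a function assigning to each internal node one of its
children. -/
structure Strategy where
  move : GameTree → GameTree
  move_mem : ∀ (c : GameTree) (cs : List GameTree), move (node c cs) ∈ c :: cs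

theorem sizeOf_lt_of_mem_children {w c : GameTree} {cs : List GameTree}
    (h : w ∈ c :: cs) : sizeOf w < sizeOf (node c cs) := by
  rcases List.mem_cons.mp h with rfl | h
  · simp only [node.sizeOf_spec]; omega
  · have := List.sizeOf_lt_of_mem h
    simp only [node.sizeOf_spec]; omega

/-- The probability that Alice wins the random-turn game when Alice plays the
pure strategy `σ` and Bob plays the pure strategy `τ`: at each internal node a
fair coin flip decides which player's strategy makes the move. -/
noncomputable def Pr (σ τ : Strategy) : GameTree → ℝ
  | leaf .alice => 1
  | leaf .bob => 0
  | node c cs =>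
      (Pr σ τ (σ.move (node c cs)) + Pr σ τ (τ.move (node c cs))) / 2
termination_by g => sizeOf g
decreasing_by
  · exact sizeOf_lt_of_mem_children (σ.move_mem c cs)
  · exact sizeOf_lt_of_mem_children (τ.move_mem c cs)

private lemma foldr_max_le {l : List ℝ} {a b : ℝ} (ha : a ≤ b) (h : ∀ x ∈ l, x ≤ b) :
    l.foldr max a ≤ b := by
  induction l with
  | nil => exact ha
  | cons x l ih =>
    simp only [List.foldr_cons, max_le_iff]
    exact ⟨h x (List.mem_cons_self), ih fun y hy => h y (List.mem_cons_of_mem _ hy)⟩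

private lemma foldr_min_le_self {l : List ℝ} {a : ℝ} : l.foldr min a ≤ a := by
  induction l with
  | nil => exact le_rfl
  | cons x l ih => exact le_trans (min_le_right _ _) ih

private lemma foldr_min_le_of_mem {l : List ℝ} {a x : ℝ} (h : x ∈ l) :
    l.foldr min a ≤ x := by
  induction l with
  | nil => simp at h
  | cons y l ih =>
    rcases List.mem_cons.mp h with rfl | h
    · exact min_le_left _ _
    · exact le_trans (min_le_right _ _) (ih h)

private lemma exists_best (c : GameTree) (cs : List GameTree) :
    ∃ x ∈ c :: cs, ∀ y ∈ c :: cs, P y ≤ P x := by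
  induction cs generalizing c with
  | nil =>
    exact ⟨c, List.mem_cons_self, by rintro y hy; simp at hy; subst hy; exact le_rfl⟩
  | cons d ds ih =>
    obtain ⟨x, hx, hmax⟩ := ih d
    rcases le_total (P c) (P x) with h | h
    · refine ⟨x, List.mem_cons_of_mem _ hx, ?_⟩
      rintro y hy
      rcases List.mem_cons.mp hy with rfl | hy
      · exact h
      · exact hmax y hy
    · refine ⟨c, List.mem_cons_self, ?_⟩
      rintro y hy
      rcases List.mem_cons.mp hy with rfl | hy
      · exact le_rfl
      · exact le_trans (hmax y hy) h

/-- Alice's greedy optimal strategy: pick a child of maximal value. -/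
noncomputable def best : Strategy where
  move g := match g with
    | leaf w => leaf w
    | node c cs => (exists_best c cs).choose
  move_mem c cs := (exists_best c cs).choose_spec.1

private lemma best_spec (c : GameTree) (cs : List GameTree) :
    ∀ y ∈ c :: cs, P y ≤ P (best.move (node c cs)) :=
  (exists_best c cs).choose_spec.2

private lemma main_ind : ∀ n, ∀ g : GameTree, sizeOf g < n → ∀ τ : Strategy,
    P g ≤ Pr best τ g := by
  intro n
  induction n with
  | zero => intro g h; exact absurd h (Nat.not_lt_zero _)
  | succ n ih =>
    intro g hg τ
    cases g with
    | leaf w => cases w <;> simp [P, Pr]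
    | node c cs =>
      rw [P, Pr]
      have hσmem := best.move_mem c cs
      have hτmem := τ.move_mem c cs
      have hσsz := sizeOf_lt_of_mem_children hσmem
      have hτsz := sizeOf_lt_of_mem_children hτmem
      have hg' : sizeOf (node c cs) ≤ n + 1 := le_of_lt hg
      have ihσ : P (best.move (node c cs)) ≤ Pr best τ (best.move (node c cs)) :=
        ih _ (by omega) τ
      have ihτ : P (τ.move (node c cs)) ≤ Pr best τ (τ.move (node c cs)) :=
        ih _ (by omega) τ
      have hmax : (cs.attach.map fun w => P w.1).foldr max (P c)
          ≤ P (best.move (node c cs)) := by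
        apply foldr_max_le (best_spec c cs c (List.mem_cons_self))
        intro x hx
        simp only [List.mem_map, List.mem_attach, true_and, Subtype.exists] at hx
        obtain ⟨w, hw, rfl⟩ := hx
        exact best_spec c cs w (List.mem_cons_of_mem _ hw)
      have hmin : (cs.attach.map fun w => P w.1).foldr min (P c)
          ≤ P (τ.move (node c cs)) := by
        rcases List.mem_cons.mp hτmem with heq | hmem
        · rw [heq]; exact foldr_min_le_self
        · apply foldr_min_le_of_mem
          simp only [List.mem_map, List.mem_attach, true_and, Subtype.exists]
          exact ⟨_, hmem, rfl⟩
      have h1 := le_trans hmax ihσ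
      have h2 := le_trans hmin ihτ
      linarith

/-- **Random-turn lower value.** For every finite game tree `G`, Alice has a
pure strategy `σ` guaranteeing her a winning probability of at least `P(G)`
against every pure strategy `τ` of Bob. -/
theorem randomTurn_lower_value (G : GameTree) :
    ∃ σ : Strategy, ∀ τ : Strategy, Pr σ τ G ≥ P G := by
  exact ⟨best, fun τ => main_ind (sizeOf G + 1) G (by omega) τ⟩

end GameTree
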